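/- Fix 0 < s < 1 and N ≥ 1, and let m be the I-method multiplier. If ξ₁, ξ₂ ∈ ℝ³ with |ξ₁| ≥ |ξ₂| > 0 and |ξ₂| ≤ N, then M(ξ₁,ξ₂) := [m(ξ₁+ξ₂)/(m(ξ₁)m(ξ₂))] · |ξ₁+ξ₂|/(|ξ₁||ξ₂|) ≲ 1/|ξ₂|, with implicit constant independent of N, ξ₁, ξ₂. -/

import Mathlib

/-- Bilinear I-method multiplier bound for a low second frequency:
for `|ξ₁| ≥ |ξ₂| > 0` with `|ξ₂| ≤ N`,
`M(ξ₁,ξ₂) = (m(ξ₁+ξ₂)/(m(ξ₁)m(ξ₂))) · |ξ₁+ξ₂|/(|ξ₁||ξ₂|) ≲ 1/|ξ₂|`,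
with implicit constant depending only on `s` and the constant `cm` in the gradient
bound `|∇m(ξ)| ≤ cm · m(ξ)/|ξ|` (the mean value theorem input). -/
theorem I_multiplier_bound_bilinear_low (s : ℝ) (hs : 0 < s) (hs1 : s < 1)
    (cm : ℝ) (hcm : 0 < cm) :
    ∃ C > (0:ℝ), ∀ (N : ℝ), 1 ≤ N →
      ∀ m : EuclideanSpace ℝ (Fin 3) → ℝ,
        (∀ ξ, 0 < m ξ) → (∀ ξ, m ξ ≤ 1) →
        (∀ ξ, ‖ξ‖ ≤ N → m ξ = 1) →
        (∀ ξ, 2 * N ≤ ‖ξ‖ → m ξ = (N / ‖ξ‖) ^ (1 - s)) →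
        (∀ ξ η : EuclideanSpace ℝ (Fin 3), ‖η‖ ≤ ‖ξ‖ → m ξ ≤ m η) →
        (∀ ξ : EuclideanSpace ℝ (Fin 3), ξ ≠ 0 →
          ‖fderiv ℝ m ξ‖ ≤ cm * m ξ / ‖ξ‖) →
      ∀ ξ₁ ξ₂ : EuclideanSpace ℝ (Fin 3),
        ‖ξ₂‖ ≤ ‖ξ₁‖ → 0 < ‖ξ₂‖ → ‖ξ₂‖ ≤ N →
        m (ξ₁ + ξ₂) / (m ξ₁ * m ξ₂) * (‖ξ₁ + ξ₂‖ / (‖ξ₁‖ * ‖ξ₂‖)) ≤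
          C / ‖ξ₂‖ := by
  refine ⟨8, by norm_num, ?_⟩
  intro N hN m hpos hle1 hlow hfar hmono hgrad ξ₁ ξ₂ h21 h2pos h2N
  have hNpos : (0:ℝ) < N := lt_of_lt_of_le one_pos hN
  have h1pos : 0 < ‖ξ₁‖ := lt_of_lt_of_le h2pos h21
  have hm2 : m ξ₂ = 1 := hlow ξ₂ h2N
  set a : ℝ := ‖ξ₁ + ξ₂‖ with ha
  have ha2 : a ≤ 2 * ‖ξ₁‖ := by
    calc a ≤ ‖ξ₁‖ + ‖ξ₂‖ := norm_add_le _ _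
      _ ≤ 2 * ‖ξ₁‖ := by linarith
  have hanneg : 0 ≤ a := norm_nonneg _
  -- main estimate
  have key : m (ξ₁ + ξ₂) / m ξ₁ * (a / ‖ξ₁‖) ≤ 8 := by
    rcases le_or_gt ‖ξ₁‖ (4 * N) with hc | hc
    · -- low case: m ξ₁ ≥ 1/4
      have hηnorm : ‖(4 * N) • (EuclideanSpace.single (0 : Fin 3) (1:ℝ))‖ = 4 * N := by
        rw [norm_smul, EuclideanSpace.norm_single]
        simp [abs_of_pos, hNpos, abs_of_pos (by linarith : (0:ℝ) < 4 * N)]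
      have hmη : m ((4 * N) • (EuclideanSpace.single (0 : Fin 3) (1:ℝ))) =
          (N / (4 * N)) ^ (1 - s) := by
        rw [hfar _ (by rw [hηnorm]; linarith), hηnorm]
      have hq : (N / (4 * N) : ℝ) = 1 / 4 := by
        field_simp
      have h14 : (1/4 : ℝ) ≤ m ξ₁ := by
        have h1 := hmono ((4 * N) • (EuclideanSpace.single (0 : Fin 3) (1:ℝ))) ξ₁
          (by rw [hηnorm]; linarith)
        rw [hmη, hq] at h1
        calc (1/4 : ℝ) = (1/4 : ℝ) ^ (1:ℝ) := by rw [Real.rpow_one]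
          _ ≤ (1/4 : ℝ) ^ (1 - s) := by
              apply Real.rpow_le_rpow_of_exponent_ge (by norm_num) (by norm_num)
              linarith
          _ ≤ m ξ₁ := h1
      have hr : m (ξ₁ + ξ₂) / m ξ₁ ≤ 4 := by
        rw [div_le_iff₀ (hpos ξ₁)]
        calc m (ξ₁ + ξ₂) ≤ 1 := hle1 _
          _ ≤ 4 * m ξ₁ := by linarith
      have hao : a / ‖ξ₁‖ ≤ 2 := by
        rw [div_le_iff₀ h1pos]; linarith
      calc m (ξ₁ + ξ₂) / m ξ₁ * (a / ‖ξ₁‖) ≤ 4 * 2 := by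
            apply mul_le_mul hr hao (div_nonneg hanneg (le_of_lt h1pos)) (by norm_num)
        _ = 8 := by norm_num
    · -- high case: both in power region
      have hlb : (3/4 : ℝ) * ‖ξ₁‖ ≤ a := by
        have h : ‖ξ₁‖ ≤ a + ‖ξ₂‖ := by
          calc ‖ξ₁‖ = ‖(ξ₁ + ξ₂) - ξ₂‖ := by rw [add_sub_cancel_right]
            _ ≤ a + ‖ξ₂‖ := norm_sub_le _ _
        linarith
      have hapos : 0 < a := by nlinarith
      have ha2N : 2 * N ≤ a := by nlinarith
      have hm1 : m ξ₁ = (N / ‖ξ₁‖) ^ (1 - s) := hfar ξ₁ (by linarith)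
      have hm3 : m (ξ₁ + ξ₂) = (N / a) ^ (1 - s) := hfar _ ha2N
      have hratio : m (ξ₁ + ξ₂) / m ξ₁ = (‖ξ₁‖ / a) ^ (1 - s) := by
        rw [hm1, hm3, ← Real.div_rpow (by positivity) (by positivity : (0:ℝ) ≤ N / ‖ξ₁‖)]
        congr 1
        field_simp
      have h43 : ‖ξ₁‖ / a ≤ 4/3 := by
        rw [div_le_iff₀ hapos]; nlinarith
      have hr : m (ξ₁ + ξ₂) / m ξ₁ ≤ 4/3 := by
        rw [hratio]
        calc (‖ξ₁‖ / a) ^ (1 - s) ≤ (4/3 : ℝ) ^ (1 - s) :=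
              Real.rpow_le_rpow (by positivity) h43 (by linarith)
          _ ≤ (4/3 : ℝ) ^ (1:ℝ) := by
              apply Real.rpow_le_rpow_of_exponent_le (by norm_num)
              linarith
          _ = 4/3 := Real.rpow_one _
      have hao : a / ‖ξ₁‖ ≤ 2 := by
        rw [div_le_iff₀ h1pos]; linarith
      have hrnn : 0 ≤ m (ξ₁ + ξ₂) / m ξ₁ := le_of_lt (div_pos (hpos _) (hpos _))
      calc m (ξ₁ + ξ₂) / m ξ₁ * (a / ‖ξ₁‖) ≤ (4/3) * 2 := by
            apply mul_le_mul hr hao (div_nonneg hanneg (le_of_lt h1pos)) (by norm_num)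
        _ ≤ 8 := by norm_num
  -- conclude
  have heq : m (ξ₁ + ξ₂) / (m ξ₁ * m ξ₂) * (a / (‖ξ₁‖ * ‖ξ₂‖)) =
      (m (ξ₁ + ξ₂) / m ξ₁ * (a / ‖ξ₁‖)) / ‖ξ₂‖ := by
    rw [hm2, mul_one]
    field_simp
  rw [heq]
  gcongr
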